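/- arXiv:1901.01420 — 6 statements merged into one kernel-verified Lean document; each statement's English description precedes it below -/
import Mathlib

section
/- Let X be a Baire topological group with identity e and let 𝒩 be a countable family of subsets of X that is a network at e. For N ∈ 𝒩 let cl(N) denote the closure of N and let int(N⁻¹·cl(N)) denote the interior of the set N⁻¹·cl(N) = {x⁻¹y : x ∈ N, y ∈ cl(N)}. Then the family ℬ = {int(N⁻¹·cl(N)) : N ∈ 𝒩, e ∈ int(N⁻¹·cl(N))} is a (countable) neighborhood base at e: every neighborhood U of e contains some member of ℬ, and every member of ℬ is a neighborhood of e. -/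
open Set Pointwise

variable {X : Type*}

/-- A family `𝒩` of subsets of `X` is a network at the point `x`: for every neighborhood `O`
of `x`, the union of all members of `𝒩` contained in `O` is a neighborhood of `x`. -/
def IsNetworkAt [TopologicalSpace X] (𝒩 : Set (Set X)) (x : X) : Prop :=
  ∀ O ∈ nhds x, (⋃₀ {N | N ∈ 𝒩 ∧ N ⊆ O}) ∈ nhds x

/-- Let `X` be a Baire topological group with identity `e = 1` and let `𝒩` be a
countable family of subsets of `X` which is a network at `e`.  Then the family
`ℬ = {interior (N⁻¹ * closure N) : N ∈ 𝒩, e ∈ interior (N⁻¹ * closure N)}` is a countable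
neighborhood base at `e`: every neighborhood `U` of `e` contains some member of `ℬ`, and
every member of `ℬ` is a neighborhood of `e`. -/
theorem statement_4 {X : Type*} [TopologicalSpace X] [Group X] [IsTopologicalGroup X]
    [BaireSpace X] (𝒩 : Set (Set X)) (hcount : 𝒩.Countable)
    (hnet : IsNetworkAt 𝒩 (1 : X)) (ℬ : Set (Set X))
    (hℬ : ℬ = {B : Set X | ∃ N ∈ 𝒩, B = interior (N⁻¹ * closure N) ∧
      (1 : X) ∈ interior (N⁻¹ * closure N)}) :
    ℬ.Countable ∧ (∀ U ∈ nhds (1 : X), ∃ B ∈ ℬ, B ⊆ U) ∧ (∀ B ∈ ℬ, B ∈ nhds (1 : X)) := by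
  refine ⟨?_, ?_, ?_⟩
  · -- countability
    have : ℬ ⊆ (fun N => interior (N⁻¹ * closure N)) '' 𝒩 := by
      rintro B hB
      rw [hℬ] at hB
      obtain ⟨N, hN, rfl, -⟩ := hB
      exact ⟨N, hN, rfl⟩
    exact (hcount.image _).mono this
  · -- base property
    intro U hU
    -- choose a small symmetric open neighborhood W of 1
    obtain ⟨V, hVopen, hV1, hVU⟩ := exists_open_nhds_one_mul_subset hU
    obtain ⟨W₀, hW₀open, hW₀1, hW₀V⟩ := exists_open_nhds_one_mul_subset (hVopen.mem_nhds hV1)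
    set W : Set X := W₀ ∩ W₀⁻¹ with hWdef
    have hWopen : IsOpen W := hW₀open.inter hW₀open.inv
    have hW1 : (1 : X) ∈ W := ⟨hW₀1, by simpa using hW₀1⟩
    have hWsub : W ⊆ W₀ := inter_subset_left
    have hWinv : W⁻¹ ⊆ W₀ := by
      intro x hx
      rw [mem_inv] at hx
      simpa using hx.2
    have hW₀subV : W₀ ⊆ V := fun x hx => hW₀V ⟨x, hx, 1, hW₀1, mul_one x⟩
    -- closure W ⊆ V
    have hclW : closure W ⊆ V := by
      have h1 : closure W ⊆ closure W * W₀ := subset_mul_left _ hW₀1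
      have h2 : closure W * W₀ = W * W₀ := hW₀open.closure_mul W
      calc closure W ⊆ W * W₀ := h1.trans h2.subset
        _ ⊆ W₀ * W₀ := mul_subset_mul_right hWsub
        _ ⊆ V := hW₀V
    -- key containment : for N ⊆ W, N⁻¹ * closure N ⊆ U
    have hkey : ∀ N : Set X, N ⊆ W → N⁻¹ * closure N ⊆ U := by
      intro N hN
      calc N⁻¹ * closure N ⊆ W⁻¹ * closure W :=
            mul_subset_mul (inv_subset_inv.2 hN) (closure_mono hN)
        _ ⊆ V * V := mul_subset_mul (hWinv.trans hW₀subV) hclW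
        _ ⊆ U := hVU
    -- the network gives a covering of a neighborhood of 1
    have hA : (⋃₀ {N | N ∈ 𝒩 ∧ N ⊆ W}) ∈ nhds 1 := hnet W (hWopen.mem_nhds hW1)
    set O : Set X := interior (⋃₀ {N | N ∈ 𝒩 ∧ N ⊆ W}) with hOdef
    have hOopen : IsOpen O := isOpen_interior
    have hO1 : (1 : X) ∈ O := mem_interior_iff_mem_nhds.2 hA
    -- Baire argument: some N with N ∈ 𝒩, N ⊆ W has closure with nonempty interior
    have hexN : ∃ N, N ∈ 𝒩 ∧ N ⊆ W ∧ (interior (closure N)).Nonempty := by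
      set S : Set (Set X) := insert Oᶜ ((fun N => closure N) '' {N | N ∈ 𝒩 ∧ N ⊆ W}) with hSdef
      have hSclosed : ∀ s ∈ S, IsClosed s := by
        rintro s (rfl | ⟨N, -, rfl⟩)
        · exact hOopen.isClosed_compl
        · exact isClosed_closure
      have hScount : S.Countable := by
        refine (Set.Countable.image ?_ _).insert _
        exact hcount.mono fun N hN => hN.1
      have hScover : ⋃₀ S = univ := by
        apply eq_univ_of_forall
        intro x
        by_cases hx : x ∈ O
        · obtain ⟨N, hN, hxN⟩ := interior_subset hx
          exact ⟨closure N, Or.inr ⟨N, hN, rfl⟩, subset_closure hxN⟩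
        · exact ⟨Oᶜ, Or.inl rfl, hx⟩
      have hdense := dense_sUnion_interior_of_closed hSclosed hScount hScover
      obtain ⟨x, hx, hxO⟩ := hdense.exists_mem_open hOopen ⟨1, hO1⟩
      rw [mem_iUnion₂] at hx
      obtain ⟨s, hs, hxs⟩ := hx
      rcases hs with rfl | ⟨N, ⟨hN, hNW⟩, rfl⟩
      · exact absurd (interior_subset hxs) (by simpa using hxO)
      · exact ⟨N, hN, hNW, ⟨x, hxs⟩⟩
    obtain ⟨N, hN, hNW, x, hx⟩ := hexN
    -- interior (closure N) meets N
    have hmeet : (interior (closure N) ∩ N).Nonempty := by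
      have hxcl : x ∈ closure N := interior_subset hx
      rw [mem_closure_iff] at hxcl
      exact hxcl (interior (closure N)) isOpen_interior hx
    obtain ⟨n, hn_int, hnN⟩ := hmeet
    -- 1 ∈ interior (N⁻¹ * closure N)
    have hone : (1 : X) ∈ interior (N⁻¹ * closure N) := by
      have hsub : N⁻¹ * interior (closure N) ⊆ N⁻¹ * closure N :=
        mul_subset_mul_left interior_subset
      have hopen : IsOpen (N⁻¹ * interior (closure N)) := isOpen_interior.mul_left
      have hmem : (1 : X) ∈ N⁻¹ * interior (closure N) :=
        ⟨n⁻¹, inv_mem_inv.mpr hnN, n, hn_int, inv_mul_cancel n⟩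
      exact interior_maximal hsub hopen hmem
    refine ⟨interior (N⁻¹ * closure N), ?_, interior_subset.trans (hkey N hNW)⟩
    rw [hℬ]
    exact ⟨N, hN, rfl, hone⟩
  · -- members are neighborhoods
    intro B hB
    rw [hℬ] at hB
    obtain ⟨N, -, rfl, h1⟩ := hB
    exact isOpen_interior.mem_nhds h1
end

section
/- Let Y be a topological group and let X be a dense subgroup of Y such that X, with the subspace topology, is a Choquet space. Then X is Gδ-dense in Y, i.e., X has non-empty intersection with every non-empty Gδ-subset of Y. -/
open Set

variable {X : Type*}

/-- Positions in the Choquet game on `X` consistent with the strategy `σ` of player `N`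
(the "nonempty" player): a position is recorded as the list of player `E`'s moves so far,
most recent first.  Player `E` starts the game with an arbitrary nonempty open set, and each
subsequent move of `E` must be a nonempty open subset of `N`'s answer `σ l` to the previous
position `l`. -/
inductive ChoquetPos [TopologicalSpace X] (σ : List (Set X) → Set X) : List (Set X) → Prop
  | single (U : Set X) : IsOpen U → U.Nonempty → ChoquetPos σ [U]
  | cons (U : Set X) (l : List (Set X)) : ChoquetPos σ l → IsOpen U → U.Nonempty →
      U ⊆ σ l → ChoquetPos σ (U :: l)

/-- The list of the first `n+1` moves of player `E` in a run `e`, most recent first. -/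
def choquetHist (e : ℕ → Set X) : ℕ → List (Set X)
  | 0 => [e 0]
  | n + 1 => e (n + 1) :: choquetHist e n

/-- `σ` is a winning strategy for player `N` (the nonempty player) in the Choquet game on `X`:
at every position reachable against `σ`, the answer `σ l` is a legal move (a nonempty open
subset of `E`'s last move), and for every infinite run of the game in which `E` plays legally
and `N` follows `σ`, the intersection of all moves played is nonempty (since the moves
decrease, this intersection equals `⋂ n, e n` where `e` enumerates `E`'s moves). -/
def IsWinningChoquetStrategy [TopologicalSpace X] (σ : List (Set X) → Set X) : Prop :=
  (∀ l, ChoquetPos σ l → IsOpen (σ l) ∧ (σ l).Nonempty ∧ ∀ U ∈ l.head?, σ l ⊆ U) ∧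
  (∀ e : ℕ → Set X, (∀ n, ChoquetPos σ (choquetHist e n)) → (⋂ n, e n).Nonempty)

/-- A topological space is Choquet if player `N` has a winning strategy in the Choquet game. -/
def IsChoquet (X : Type*) [TopologicalSpace X] : Prop :=
  ∃ σ : List (Set X) → Set X, IsWinningChoquetStrategy σ

/-- A subset `A` of a topological space is `Gδ`-dense if it has nonempty intersection with
every nonempty `Gδ`-subset. -/
def IsGδDense {Y : Type*} [TopologicalSpace Y] (A : Set Y) : Prop :=
  ∀ G : Set Y, IsGδ G → G.Nonempty → (A ∩ G).Nonempty

section ChoquetAux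

variable {Y : Type*} [TopologicalSpace Y] [Group Y] [IsTopologicalGroup Y]

/-- Auxiliary state for the interleaved double run of the Choquet game used in the proof of
`statement_6`.  `l₁` is the history of the "main" run, `l₂` the history of the run translated
by `y` on the right, `Oc` is an open region of `Y` (the region of the current move of run 2,
in untranslated coordinates), `M` is the region of the current move of run 1. -/
structure ChoquetGS (X : Subgroup Y) (σ : List (Set X) → Set X) (y : Y) (W : ℕ → Set Y) :
    Type _ where
  l₁ : List (Set X)
  l₂ : List (Set X)
  k : ℕ
  Oc : Set Y
  M : Set Y
  hOc : IsOpen Oc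
  pos₁ : ChoquetPos σ l₁
  pos₂ : ChoquetPos σ l₂
  hM : l₁.head? = some (Subtype.val ⁻¹' M)
  h₂ : l₂.head? = some {x : X | (x : Y) * y ∈ Oc}
  hleg : (Subtype.val ⁻¹' Oc : Set X) ⊆ σ l₁
  hP : ∀ u ∈ Oc, ∀ v ∈ Oc, y * (u⁻¹ * v) ∈ W k

theorem choquet_gstep (X : Subgroup Y) (hdense : Dense (X : Set Y))
    (σ : List (Set X) → Set X) (hwin : IsWinningChoquetStrategy σ)
    (y : Y) (W : ℕ → Set Y) (N : ℕ → Set Y)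
    (hNo : ∀ n, IsOpen (N n)) (hN1 : ∀ n, (1 : Y) ∈ N n)
    (hNW : ∀ n, ∀ u ∈ N n, ∀ v ∈ N n, y * (u⁻¹ * v) ∈ W n)
    (s : ChoquetGS X σ y W) :
    ∃ s' : ChoquetGS X σ y W, s'.l₁ = s'.l₁.headI :: s.l₁ ∧ s'.l₂ = s'.l₂.headI :: s.l₂ ∧
      s'.k = s.k + 1 ∧ s'.M ⊆ s.Oc := by
  classical
  -- response of σ to run 2
  obtain ⟨hT_open, hT_ne, hT_sub⟩ := hwin.1 s.l₂ s.pos₂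
  obtain ⟨Traw, hTraw_open, hTraw⟩ := isOpen_induced_iff.mp hT_open
  have hσ₂head : σ s.l₂ ⊆ {x : X | (x : Y) * y ∈ s.Oc} :=
    hT_sub _ (Option.mem_def.mpr s.h₂)
  set T : Set Y := Traw ∩ {z : Y | z * y ∈ s.Oc} with hTdef
  have hTopen : IsOpen T := hTraw_open.inter (s.hOc.preimage (continuous_mul_right y))
  have hTtrace : (Subtype.val ⁻¹' T : Set X) = σ s.l₂ := by
    ext x
    constructor
    · rintro ⟨hx1, _⟩
      rw [← hTraw]; exact hx1
    · intro hx
      refine ⟨?_, hσ₂head hx⟩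
      rw [← hTraw] at hx; exact hx
  set M' : Set Y := (fun z : Y => z * y⁻¹) ⁻¹' T with hM'def
  have hM'open : IsOpen M' := hTopen.preimage (continuous_mul_right y⁻¹)
  have hM'subOc : M' ⊆ s.Oc := by
    intro z hz
    have h2 : z * y⁻¹ * y ∈ s.Oc := hz.2
    simpa using h2
  set m₁ : Set X := (Subtype.val ⁻¹' M' : Set X) with hm₁def
  have hm₁open : IsOpen m₁ := hM'open.preimage continuous_subtype_val
  obtain ⟨x₀, hx₀⟩ := hT_ne
  have hx₀T : (x₀ : Y) ∈ T := by
    have : x₀ ∈ (Subtype.val ⁻¹' T : Set X) := by rw [hTtrace]; exact hx₀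
    exact this
  have hM'ne : M'.Nonempty := ⟨(x₀ : Y) * y, by simpa [hM'def] using hx₀T⟩
  obtain ⟨w, hwX, hwM'⟩ := hdense.exists_mem_open hM'open hM'ne
  have hm₁ne : m₁.Nonempty := ⟨⟨w, hwX⟩, hwM'⟩
  have hm₁leg : m₁ ⊆ σ s.l₁ := by
    intro x hx
    have h1 : (x : Y) * y⁻¹ ∈ T := hx
    have h2 : (x : Y) * y⁻¹ * y ∈ s.Oc := h1.2
    have h3 : (x : Y) ∈ s.Oc := by simpa using h2
    exact s.hleg h3
  have pos₁' : ChoquetPos σ (m₁ :: s.l₁) := .cons _ _ s.pos₁ hm₁open hm₁ne hm₁leg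
  -- response of σ to run 1 extended by m₁
  obtain ⟨hS_open, hS_ne, hS_sub⟩ := hwin.1 (m₁ :: s.l₁) pos₁'
  obtain ⟨Sraw, hSraw_open, hSraw⟩ := isOpen_induced_iff.mp hS_open
  have hσ₁head : σ (m₁ :: s.l₁) ⊆ m₁ := hS_sub m₁ rfl
  set S : Set Y := Sraw ∩ M' with hSdef
  have hSopen : IsOpen S := hSraw_open.inter hM'open
  have hStrace : (Subtype.val ⁻¹' S : Set X) = σ (m₁ :: s.l₁) := by
    ext x
    constructor
    · rintro ⟨hx1, _⟩
      rw [← hSraw]; exact hx1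
    · intro hx
      refine ⟨?_, hσ₁head hx⟩
      rw [← hSraw] at hx; exact hx
  obtain ⟨x₁, hx₁⟩ := hS_ne
  have hx₁S : (x₁ : Y) ∈ S := by
    have : x₁ ∈ (Subtype.val ⁻¹' S : Set X) := by rw [hStrace]; exact hx₁
    exact this
  have hVopen : IsOpen ((fun z : Y => z * y) ⁻¹' S) := hSopen.preimage (continuous_mul_right y)
  have hVne : ((fun z : Y => z * y) ⁻¹' S).Nonempty := ⟨(x₁ : Y) * y⁻¹, by simpa using hx₁S⟩
  obtain ⟨xq, hxqX, hxqS⟩ := hdense.exists_mem_open hVopen hVne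
  -- xq * y ∈ S, xq ∈ X
  set Oc' : Set Y := S ∩ (fun z : Y => (xq * y)⁻¹ * z) ⁻¹' (N (s.k + 1)) with hOc'def
  have hOc'open : IsOpen Oc' := hSopen.inter ((hNo _).preimage (continuous_mul_left _))
  have hqOc' : xq * y ∈ Oc' := by
    refine ⟨hxqS, ?_⟩
    show (xq * y)⁻¹ * (xq * y) ∈ N (s.k + 1)
    rw [inv_mul_cancel]
    exact hN1 (s.k + 1)
  set m₂ : Set X := {x : X | (x : Y) * y ∈ Oc'} with hm₂def
  have hm₂open : IsOpen m₂ := hOc'open.preimage (continuous_subtype_val.mul continuous_const)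
  have hm₂ne : m₂.Nonempty := ⟨⟨xq, hxqX⟩, hqOc'⟩
  have hm₂leg : m₂ ⊆ σ s.l₂ := by
    intro x hx
    have h1 : (x : Y) * y ∈ S := hx.1
    have h2 : (x : Y) * y ∈ M' := h1.2
    have h3 : (x : Y) * y * y⁻¹ ∈ T := h2
    have h4 : (x : Y) ∈ T := by simpa using h3
    rw [← hTtrace]; exact h4
  have pos₂' : ChoquetPos σ (m₂ :: s.l₂) := .cons _ _ s.pos₂ hm₂open hm₂ne hm₂leg
  refine ⟨⟨m₁ :: s.l₁, m₂ :: s.l₂, s.k + 1, Oc', M', hOc'open, pos₁', pos₂', rfl, rfl,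
    ?_, ?_⟩, rfl, rfl, rfl, hM'subOc⟩
  · intro x hx
    have h1 : (x : Y) ∈ S := hx.1
    have : x ∈ (Subtype.val ⁻¹' S : Set X) := h1
    rw [hStrace] at this; exact this
  · intro u hu v hv
    have hμ : (xq * y)⁻¹ * u ∈ N (s.k + 1) := hu.2
    have hν : (xq * y)⁻¹ * v ∈ N (s.k + 1) := hv.2
    have h := hNW (s.k + 1) _ hμ _ hν
    have hgr : ((xq * y)⁻¹ * u)⁻¹ * ((xq * y)⁻¹ * v) = u⁻¹ * v := by group
    rwa [hgr] at h

theorem choquet_ginit (X : Subgroup Y) (hdense : Dense (X : Set Y))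
    (σ : List (Set X) → Set X) (hwin : IsWinningChoquetStrategy σ)
    (y : Y) (W : ℕ → Set Y) (N : ℕ → Set Y)
    (hNo : ∀ n, IsOpen (N n)) (hN1 : ∀ n, (1 : Y) ∈ N n)
    (hNW : ∀ n, ∀ u ∈ N n, ∀ v ∈ N n, y * (u⁻¹ * v) ∈ W n) :
    ∃ s : ChoquetGS X σ y W, s.l₁ = [s.l₁.headI] ∧ s.l₂ = [s.l₂.headI] ∧ s.k = 0 := by
  classical
  set U₀ : Set X := (Subtype.val ⁻¹' (univ : Set Y) : Set X) with hU₀def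
  have hU₀open : IsOpen U₀ := isOpen_univ.preimage continuous_subtype_val
  have hU₀ne : U₀.Nonempty := ⟨⟨1, X.one_mem⟩, mem_univ _⟩
  have pos₁ : ChoquetPos σ [U₀] := .single _ hU₀open hU₀ne
  obtain ⟨hS_open, hS_ne, _⟩ := hwin.1 [U₀] pos₁
  obtain ⟨Sraw, hSraw_open, hSraw⟩ := isOpen_induced_iff.mp hS_open
  obtain ⟨x₁, hx₁⟩ := hS_ne
  have hx₁S : (x₁ : Y) ∈ Sraw := by
    have : x₁ ∈ (Subtype.val ⁻¹' Sraw : Set X) := by rw [hSraw]; exact hx₁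
    exact this
  have hVopen : IsOpen ((fun z : Y => z * y) ⁻¹' Sraw) :=
    hSraw_open.preimage (continuous_mul_right y)
  have hVne : ((fun z : Y => z * y) ⁻¹' Sraw).Nonempty := ⟨(x₁ : Y) * y⁻¹, by simpa using hx₁S⟩
  obtain ⟨xq, hxqX, hxqS⟩ := hdense.exists_mem_open hVopen hVne
  set Oc' : Set Y := Sraw ∩ (fun z : Y => (xq * y)⁻¹ * z) ⁻¹' (N 0) with hOc'def
  have hOc'open : IsOpen Oc' := hSraw_open.inter ((hNo _).preimage (continuous_mul_left _))
  have hqOc' : xq * y ∈ Oc' := by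
    refine ⟨hxqS, ?_⟩
    show (xq * y)⁻¹ * (xq * y) ∈ N 0
    rw [inv_mul_cancel]
    exact hN1 0
  set m₂ : Set X := {x : X | (x : Y) * y ∈ Oc'} with hm₂def
  have hm₂open : IsOpen m₂ := hOc'open.preimage (continuous_subtype_val.mul continuous_const)
  have hm₂ne : m₂.Nonempty := ⟨⟨xq, hxqX⟩, hqOc'⟩
  have pos₂ : ChoquetPos σ [m₂] := .single _ hm₂open hm₂ne
  refine ⟨⟨[U₀], [m₂], 0, Oc', univ, hOc'open, pos₁, pos₂, rfl, rfl, ?_, ?_⟩,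
    rfl, rfl, rfl⟩
  · intro x hx
    have h1 : (x : Y) ∈ Sraw := hx.1
    have : x ∈ (Subtype.val ⁻¹' Sraw : Set X) := h1
    rw [hSraw] at this; exact this
  · intro u hu v hv
    have hμ : (xq * y)⁻¹ * u ∈ N 0 := hu.2
    have hν : (xq * y)⁻¹ * v ∈ N 0 := hv.2
    have h := hNW 0 _ hμ _ hν
    have hgr : ((xq * y)⁻¹ * u)⁻¹ * ((xq * y)⁻¹ * v) = u⁻¹ * v := by group
    rwa [hgr] at h

end ChoquetAux

/-- Let `Y` be a topological group and let `X` be a dense subgroup of `Y` such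
that `X`, with the subspace topology, is a Choquet space.  Then `X` is `Gδ`-dense in `Y`. -/
theorem statement_6 {Y : Type*} [TopologicalSpace Y] [Group Y] [IsTopologicalGroup Y]
    (X : Subgroup Y) (hdense : Dense (X : Set Y)) (hChoquet : IsChoquet ↥X) :
    IsGδDense (X : Set Y) := by
  classical
  obtain ⟨σ, hwin⟩ := hChoquet
  intro G hG hGne
  obtain ⟨y, hy⟩ := hGne
  obtain ⟨T, hTopen, hTc, rfl⟩ := hG
  rcases T.eq_empty_or_nonempty with hTe | hTne
  · exact ⟨1, X.one_mem, by simp [hTe]⟩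
  obtain ⟨Wf, rfl⟩ := Set.Countable.exists_eq_range hTc hTne
  have hWopen : ∀ n, IsOpen (Wf n) := fun n => hTopen _ (mem_range_self n)
  have hyW : ∀ n, y ∈ Wf n := fun n => hy _ (mem_range_self n)
  -- choose the neighbourhoods N n of 1 with y * (N n)⁻¹ * (N n) ⊆ Wf n
  have hNex : ∀ n, ∃ N : Set Y, IsOpen N ∧ (1 : Y) ∈ N ∧
      ∀ u ∈ N, ∀ v ∈ N, y * (u⁻¹ * v) ∈ Wf n := by
    intro n
    have hc : Continuous fun p : Y × Y => y * (p.1⁻¹ * p.2) :=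
      continuous_const.mul ((continuous_fst.inv).mul continuous_snd)
    have hopen : IsOpen ((fun p : Y × Y => y * (p.1⁻¹ * p.2)) ⁻¹' (Wf n)) :=
      (hWopen n).preimage hc
    have hmem : ((1 : Y), (1 : Y)) ∈ (fun p : Y × Y => y * (p.1⁻¹ * p.2)) ⁻¹' (Wf n) := by
      simpa using hyW n
    obtain ⟨u, v, hu, hv, h1u, h1v, huv⟩ := isOpen_prod_iff.mp hopen 1 1 hmem
    refine ⟨u ∩ v, hu.inter hv, ⟨h1u, h1v⟩, fun a ha b hb => ?_⟩
    exact huv (Set.mk_mem_prod ha.1 hb.2)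
  choose N hNo hN1 hNW using hNex
  -- the iterated game state
  let F : ChoquetGS X σ y Wf → ChoquetGS X σ y Wf :=
    fun s => Classical.choose (choquet_gstep X hdense σ hwin y Wf N hNo hN1 hNW s)
  have hF : ∀ s, (F s).l₁ = (F s).l₁.headI :: s.l₁ ∧ (F s).l₂ = (F s).l₂.headI :: s.l₂ ∧
      (F s).k = s.k + 1 ∧ (F s).M ⊆ s.Oc :=
    fun s => Classical.choose_spec (choquet_gstep X hdense σ hwin y Wf N hNo hN1 hNW s)
  let s0 : ChoquetGS X σ y Wf := Classical.choose (choquet_ginit X hdense σ hwin y Wf N hNo hN1 hNW)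
  have hs0 := Classical.choose_spec (choquet_ginit X hdense σ hwin y Wf N hNo hN1 hNW)
  let st : ℕ → ChoquetGS X σ y Wf := fun n => F^[n] s0
  have hst0 : st 0 = s0 := rfl
  have hstS : ∀ n, st (n + 1) = F (st n) := fun n => Function.iterate_succ_apply' F n s0
  let e : ℕ → Set X := fun n => (st n).l₁.headI
  let f : ℕ → Set X := fun n => (st n).l₂.headI
  have hk : ∀ n, (st n).k = n := by
    intro n
    induction n with
    | zero => exact hs0.2.2
    | succ n ih => rw [hstS n, (hF (st n)).2.2.1, ih]
  have hcons₁ : ∀ n, ∃ t, (st n).l₁ = (st n).l₁.headI :: t := by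
    intro n
    cases n with
    | zero => exact ⟨[], hs0.1⟩
    | succ n => exact ⟨(st n).l₁, by rw [hstS n]; exact (hF (st n)).1⟩
  have hcons₂ : ∀ n, ∃ t, (st n).l₂ = (st n).l₂.headI :: t := by
    intro n
    cases n with
    | zero => exact ⟨[], hs0.2.1⟩
    | succ n => exact ⟨(st n).l₂, by rw [hstS n]; exact (hF (st n)).2.1⟩
  have hhist₁ : ∀ n, choquetHist e n = (st n).l₁ := by
    intro n
    induction n with
    | zero => exact hs0.1.symm
    | succ n ih =>
      have h1 := (hF (st n)).1
      rw [← hstS n] at h1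
      show e (n + 1) :: choquetHist e n = (st (n + 1)).l₁
      rw [ih]
      exact h1.symm
  have hhist₂ : ∀ n, choquetHist f n = (st n).l₂ := by
    intro n
    induction n with
    | zero => exact hs0.2.1.symm
    | succ n ih =>
      have h1 := (hF (st n)).2.1
      rw [← hstS n] at h1
      show f (n + 1) :: choquetHist f n = (st (n + 1)).l₂
      rw [ih]
      exact h1.symm
  have hpos₁ : ∀ n, ChoquetPos σ (choquetHist e n) := fun n => (hhist₁ n) ▸ (st n).pos₁
  have hpos₂ : ∀ n, ChoquetPos σ (choquetHist f n) := fun n => (hhist₂ n) ▸ (st n).pos₂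
  obtain ⟨α, hα⟩ := hwin.2 e hpos₁
  obtain ⟨ξ, hξ⟩ := hwin.2 f hpos₂
  have hα' : ∀ n, α ∈ e n := fun n => mem_iInter.mp hα n
  have hξ' : ∀ n, ξ ∈ f n := fun n => mem_iInter.mp hξ n
  have hhead₁ : ∀ n, (st n).l₁.headI = Subtype.val ⁻¹' (st n).M := by
    intro n
    obtain ⟨t, ht⟩ := hcons₁ n
    have h := (st n).hM
    rw [ht] at h
    simpa using h
  have hhead₂ : ∀ n, (st n).l₂.headI = {x : X | (x : Y) * y ∈ (st n).Oc} := by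
    intro n
    obtain ⟨t, ht⟩ := hcons₂ n
    have h := (st n).h₂
    rw [ht] at h
    simpa using h
  have hξOc : ∀ n, (ξ : Y) * y ∈ (st n).Oc := by
    intro n
    have h := hξ' n
    have h2 : ξ ∈ (st n).l₂.headI := h
    rw [hhead₂ n] at h2
    exact h2
  have hαOc : ∀ n, (α : Y) ∈ (st n).Oc := by
    intro n
    have h := hα' (n + 1)
    have h2 : α ∈ (st (n + 1)).l₁.headI := h
    rw [hhead₁ (n + 1)] at h2
    have h3 : (α : Y) ∈ (st (n + 1)).M := h2
    have h4 : (st (n + 1)).M ⊆ (st n).Oc := by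
      rw [hstS n]; exact (hF (st n)).2.2.2
    exact h4 h3
  have hzW : ∀ n, (ξ : Y)⁻¹ * (α : Y) ∈ Wf n := by
    intro n
    have h := (st n).hP _ (hξOc n) _ (hαOc n)
    rw [hk n] at h
    have hgr : y * (((ξ : Y) * y)⁻¹ * (α : Y)) = (ξ : Y)⁻¹ * (α : Y) := by group
    rwa [hgr] at h
  refine ⟨((ξ⁻¹ * α : X) : Y), (ξ⁻¹ * α).2, ?_⟩
  rintro t ⟨n, rfl⟩
  have hcoe : ((ξ⁻¹ * α : X) : Y) = (ξ : Y)⁻¹ * (α : Y) := by push_cast; rfl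
  rw [hcoe]
  exact hzW n
end

section
/- Let Y be a Choquet topological space and let X ⊆ Y be a Gδ-dense subset of Y. Then X, with the subspace topology, is a Choquet space. -/
open Set

variable {X : Type*}

/-- The largest open set of `Y` whose trace on `X` is contained in `U`. -/
def extSet {Y : Type*} [TopologicalSpace Y] (X : Set Y) (U : Set ↥X) : Set Y :=
  ⋃₀ {V : Set Y | IsOpen V ∧ Subtype.val ⁻¹' V ⊆ U}

theorem extSet_isOpen {Y : Type*} [TopologicalSpace Y] (X : Set Y) (U : Set ↥X) :
    IsOpen (extSet X U) :=
  isOpen_sUnion fun _ hV => hV.1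

theorem preimage_extSet_subset {Y : Type*} [TopologicalSpace Y] (X : Set Y) (U : Set ↥X) :
    Subtype.val ⁻¹' extSet X U ⊆ U := by
  rintro x ⟨V, ⟨hVo, hVU⟩, hxV⟩
  exact hVU hxV

theorem preimage_extSet {Y : Type*} [TopologicalSpace Y] (X : Set Y) {U : Set ↥X}
    (hU : IsOpen U) : Subtype.val ⁻¹' extSet X U = U := by
  refine subset_antisymm (preimage_extSet_subset X U) ?_
  obtain ⟨V, hVo, rfl⟩ := isOpen_induced_iff.mp hU
  exact fun x hx => ⟨V, ⟨hVo, subset_rfl⟩, hx⟩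

/-- The simulated position in the Choquet game on `Y`, from a position in the game on `X`. -/
def simPos {Y : Type*} [TopologicalSpace Y] (X : Set Y) (σ : List (Set Y) → Set Y) :
    List (Set ↥X) → List (Set Y)
  | [] => []
  | [U] => [extSet X U]
  | U :: a :: l => (extSet X U ∩ σ (simPos X σ (a :: l))) :: simPos X σ (a :: l)

/-- Let `Y` be a Choquet topological space and let `X ⊆ Y` be a `Gδ`-dense
subset of `Y`.  Then `X`, with the subspace topology, is a Choquet space. -/
theorem statement_7 {Y : Type*} [TopologicalSpace Y] (hY : IsChoquet Y)
    (X : Set Y) (hX : IsGδDense X) : IsChoquet ↥X := by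
  obtain ⟨σ, hσ1, hσ2⟩ := hY
  set τ : List (Set ↥X) → Set ↥X := fun l => Subtype.val ⁻¹' σ (simPos X σ l) with hτ
  have hopen : ∀ S : Set Y, IsOpen S → S.Nonempty → (Subtype.val ⁻¹' S : Set ↥X).Nonempty := by
    intro S hSo hSne
    obtain ⟨x, hxX, hxS⟩ := hX S hSo.isGδ hSne
    exact ⟨⟨x, hxX⟩, hxS⟩
  have key : ∀ l, ChoquetPos τ l → ChoquetPos σ (simPos X σ l) := by
    intro l hl
    induction hl with
    | single U hU hne =>
        refine ChoquetPos.single _ (extSet_isOpen X U) ?_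
        obtain ⟨x, hx⟩ := hne
        rw [← preimage_extSet X hU] at hx
        exact ⟨_, hx⟩
    | cons U l hl hU hne hsub ih =>
        obtain ⟨a, t, rfl⟩ : ∃ a t, l = a :: t := by cases hl <;> exact ⟨_, _, rfl⟩
        have hσo := (hσ1 _ ih).1
        refine ChoquetPos.cons _ _ ih ((extSet_isOpen X U).inter hσo) ?_ inter_subset_right
        obtain ⟨x, hx⟩ := hne
        refine ⟨x.1, ?_, hsub hx⟩
        rw [← preimage_extSet X hU] at hx
        exact hx
  refine ⟨τ, ⟨?_, ?_⟩⟩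
  · intro l hl
    have hpos := key l hl
    obtain ⟨hσo, hσne, hσsub⟩ := hσ1 _ hpos
    refine ⟨hσo.preimage continuous_subtype_val, hopen _ hσo hσne, ?_⟩
    intro U hU
    obtain ⟨a, t, rfl⟩ : ∃ a t, l = a :: t := by cases hl <;> exact ⟨_, _, rfl⟩
    cases hU
    intro x hx
    have hx' : (x : Y) ∈ σ (simPos X σ (U :: t)) := hx
    have hmem : (x : Y) ∈ extSet X U := by
      cases t with
      | nil => exact hσsub _ rfl hx'
      | cons b t' => exact (hσsub _ rfl hx').1
    exact preimage_extSet_subset X U hmem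
  · intro e he
    set E : ℕ → Set Y := fun n =>
      Nat.rec (extSet X (e 0))
        (fun n _ => extSet X (e (n + 1)) ∩ σ (simPos X σ (choquetHist e n))) n with hE
    have hsim : ∀ n, simPos X σ (choquetHist e n) = choquetHist E n := by
      intro n
      induction n with
      | zero => rfl
      | succ n ih =>
          obtain ⟨a, t, hat⟩ : ∃ a t, choquetHist e n = a :: t := by
            cases n <;> exact ⟨_, _, rfl⟩
          show simPos X σ (e (n + 1) :: choquetHist e n) = E (n + 1) :: choquetHist E n
          rw [← ih]
          rw [hat]
          show (extSet X (e (n+1)) ∩ σ (simPos X σ (a :: t))) :: simPos X σ (a :: t) = _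
          rw [← hat]
    have hposE : ∀ n, ChoquetPos σ (choquetHist E n) := by
      intro n
      rw [← hsim n]
      exact key _ (he n)
    have hne := hσ2 E hposE
    have hGδ : IsGδ (⋂ n, E n) := by
      refine IsGδ.iInter fun n => ?_
      have : IsOpen (E n) := by
        cases n with
        | zero => exact extSet_isOpen X _
        | succ n => exact (extSet_isOpen X _).inter (hσ1 _ (key _ (he n))).1
      exact this.isGδ
    obtain ⟨x, hxX, hxG⟩ := hX _ hGδ hne
    simp only [mem_iInter] at hxG
    refine ⟨⟨x, hxX⟩, mem_iInter.mpr fun n => ?_⟩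
    have : x ∈ extSet X (e n) := by
      cases n with
      | zero => exact hxG 0
      | succ n => exact (hxG (n + 1)).1
    exact preimage_extSet_subset X (e n) this
end

section
/- Let X be a topological space containing a dense subspace D such that D, with the subspace topology, is a Choquet space. Then X is a Choquet space. -/
open Set

variable {X : Type*}

open Classical in
noncomputable def choquetExt {X : Type*} [TopologicalSpace X] (D : Set X) (W : Set ↥D) : Set X :=
  if h : IsOpen W then (isOpen_induced_iff.mp h).choose else univ

theorem choquetExt_isOpen {X : Type*} [TopologicalSpace X] (D : Set X) (W : Set ↥D)
    (h : IsOpen W) : IsOpen (choquetExt D W) := by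
  rw [choquetExt, dif_pos h]; exact (isOpen_induced_iff.mp h).choose_spec.1

theorem choquetExt_preimage {X : Type*} [TopologicalSpace X] (D : Set X) (W : Set ↥D)
    (h : IsOpen W) : Subtype.val ⁻¹' (choquetExt D W) = W := by
  rw [choquetExt, dif_pos h]; exact (isOpen_induced_iff.mp h).choose_spec.2

/-- Let `X` be a topological space containing a dense subspace `D` such that
`D`, with the subspace topology, is a Choquet space.  Then `X` is a Choquet space. -/
theorem statement_8 {X : Type*} [TopologicalSpace X] (D : Set X) (hdense : Dense D)
    (hD : IsChoquet ↥D) : IsChoquet X := by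

  classical
  obtain ⟨σ', hleg, hwin⟩ := hD
  set pre : Set X → Set ↥D := fun U => Subtype.val ⁻¹' U with hpre
  set σ : List (Set X) → Set X :=
    fun l => choquetExt D (σ' (l.map pre)) ∩ (l.head?.getD univ) with hσ
  -- nonemptiness of preimages of nonempty open sets
  have hne : ∀ U : Set X, IsOpen U → U.Nonempty → (pre U).Nonempty := by
    intro U hU hUne
    obtain ⟨x, hxU, hxD⟩ := hdense.inter_open_nonempty U hU hUne
    exact ⟨⟨x, hxD⟩, hxU⟩
  -- the translated position is a legal position for σ'
  have key : ∀ l, ChoquetPos σ l → ChoquetPos σ' (l.map pre) := by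
    intro l hl
    induction hl with
    | single U hU hUne => exact ChoquetPos.single _ (hU.preimage continuous_subtype_val) (hne U hU hUne)
    | cons U l hl hU hUne hsub ih =>
        refine ChoquetPos.cons _ _ ih (hU.preimage continuous_subtype_val) (hne U hU hUne) ?_
        have hopen : IsOpen (σ' (l.map pre)) := (hleg _ ih).1
        intro x hx
        have := hsub hx
        have h2 : (x : X) ∈ choquetExt D (σ' (l.map pre)) := this.1
        rw [← choquetExt_preimage D _ hopen]
        exact h2
  refine ⟨σ, ?_, ?_⟩
  · intro l hl
    have hl' := key l hl
    obtain ⟨hopen, hne', hsub'⟩ := hleg _ hl'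
    -- head exists and is open
    obtain ⟨U0, l0, hUo, rfl⟩ : ∃ U0 l0, IsOpen U0 ∧ l = U0 :: l0 := by
      cases hl with
      | single U hU _ => exact ⟨U, [], hU, rfl⟩
      | cons U l0 _ hU _ _ => exact ⟨U, l0, hU, rfl⟩
    refine ⟨((choquetExt_isOpen D _ hopen).inter hUo), ?_, ?_⟩
    · obtain ⟨d, hd⟩ := hne'
      refine ⟨(d : X), ?_, ?_⟩
      · have := choquetExt_preimage D _ hopen
        rw [← this] at hd
        exact hd
      · have hsub2 : σ' ((U0 :: l0).map pre) ⊆ pre U0 := hsub' (pre U0) rfl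
        exact hsub2 hd
    · intro U hU
      simp only [List.head?] at hU
      cases hU
      exact fun x hx => hx.2
  · intro e he
    set e' : ℕ → Set ↥D := fun n => pre (e n) with he'
    have hhist : ∀ n, choquetHist e' n = (choquetHist e n).map pre := by
      intro n
      induction n with
      | zero => rfl
      | succ n ih => simp [choquetHist, ih]; rfl
    have : ∀ n, ChoquetPos σ' (choquetHist e' n) := by
      intro n; rw [hhist]; exact key _ (he n)
    obtain ⟨d, hd⟩ := hwin e' this
    refine ⟨(d : X), ?_⟩
    simp only [mem_iInter] at hd ⊢
    exact fun n => hd n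
end

section
/- Let X be a topological space and let A ⊆ X be a dense subset such that A, with the subspace topology, is a Choquet space. Then player N has a winning strategy in the Banach–Mazur game BM(X, A): there is a strategy for N, choosing the non-empty open sets with odd index, such that every play U_0 ⊇ U_1 ⊇ U_2 ⊇ ⋯ consistent with this strategy satisfies A ∩ ⋂_n U_n ≠ ∅. -/
open Set

variable {X : Type*}

/-- `σ` is a winning strategy for player `N` in the Banach–Mazur game `BM(X, A)`: the game is
played exactly like the Choquet game (player `E` starts, the players alternately choose
nonempty open sets, each contained in the previous one), but player `N` wins a run if `A`
meets the intersection of all moves played. -/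
def IsWinningBanachMazurStrategy [TopologicalSpace X] (A : Set X)
    (σ : List (Set X) → Set X) : Prop :=
  (∀ l, ChoquetPos σ l → IsOpen (σ l) ∧ (σ l).Nonempty ∧ ∀ U ∈ l.head?, σ l ⊆ U) ∧
  (∀ e : ℕ → Set X, (∀ n, ChoquetPos σ (choquetHist e n)) → (A ∩ ⋂ n, e n).Nonempty)

/-- Let `X` be a topological space and let `A ⊆ X` be a dense subset such that
`A`, with the subspace topology, is a Choquet space.  Then player `N` has a winning strategy
in the Banach–Mazur game `BM(X, A)`. -/
theorem statement_9 {X : Type*} [TopologicalSpace X] (A : Set X) (hdense : Dense A)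
    (hA : IsChoquet ↥A) :
    ∃ σ : List (Set X) → Set X, IsWinningBanachMazurStrategy A σ := by
  classical
  obtain ⟨τ, hτ1, hτ2⟩ := hA
  set r : Set X → Set A := fun U => Subtype.val ⁻¹' U with hr
  have hne : ∀ U : Set X, IsOpen U → U.Nonempty → (r U).Nonempty := by
    intro U hU hUne
    obtain ⟨x, hxA, hxU⟩ := hdense.exists_mem_open hU hUne
    exact ⟨⟨x, hxA⟩, hxU⟩
  have hV : ∀ l : List (Set X), ∃ Vl : Set X, IsOpen Vl ∧
      (IsOpen (τ (l.map r)) → r Vl = τ (l.map r)) := by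
    intro l
    by_cases h : IsOpen (τ (l.map r))
    · obtain ⟨Vl, hVo, hVe⟩ := isOpen_induced_iff.mp h
      exact ⟨Vl, hVo, fun _ => hVe⟩
    · exact ⟨∅, isOpen_empty, fun h' => absurd h' h⟩
  choose V hVopen hVeq using hV
  set σ : List (Set X) → Set X := fun l => V l ∩ l.headI with hσ
  -- key: positions transfer to A side, and the head of a position is open
  have key : ∀ l, ChoquetPos σ l → ChoquetPos τ (l.map r) ∧ IsOpen l.headI := by
    intro l hl
    induction hl with
    | single U hU hUne =>
      exact ⟨ChoquetPos.single _ (hU.preimage continuous_subtype_val) (hne U hU hUne), hU⟩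
    | cons U l hl hU hUne hsub ih =>
      refine ⟨ChoquetPos.cons _ _ ih.1 (hU.preimage continuous_subtype_val)
        (hne U hU hUne) ?_, hU⟩
      have hτopen : IsOpen (τ (l.map r)) := (hτ1 _ ih.1).1
      have h1 : r U ⊆ r (V l) := fun a ha => (hsub ha).1
      rw [hVeq l hτopen] at h1
      exact h1
  have hmapeq : ∀ l, ChoquetPos σ l → r (σ l) = τ (l.map r) := by
    intro l hl
    have hτopen : IsOpen (τ (l.map r)) := (hτ1 _ (key l hl).1).1
    have hsub : τ (l.map r) ⊆ r l.headI := by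
      cases l with
      | nil => cases hl
      | cons a t =>
        exact (hτ1 _ (key _ hl).1).2.2 (r a) rfl
    have : r (σ l) = r (V l) ∩ r l.headI := rfl
    rw [this, hVeq l hτopen, inter_eq_left.mpr hsub]
  have hσne : ∀ l, ChoquetPos σ l → (σ l).Nonempty := by
    intro l hl
    have := (hτ1 _ (key l hl).1).2.1
    rw [← hmapeq l hl] at this
    obtain ⟨a, ha⟩ := this
    exact ⟨a, ha⟩
  refine ⟨σ, fun l hl => ⟨(hVopen l).inter (key l hl).2, hσne l hl, ?_⟩, ?_⟩
  · intro U hU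
    cases l with
    | nil => simp at hU
    | cons a t =>
      simp only [List.head?_cons, Option.mem_def, Option.some.injEq] at hU
      subst hU
      exact inter_subset_right
  · intro e he
    have histmap : ∀ n, (choquetHist (fun n => r (e n)) n) = (choquetHist e n).map r := by
      intro n
      induction n with
      | zero => rfl
      | succ n ih => simp [choquetHist, ih]
    have hpos : ∀ n, ChoquetPos τ (choquetHist (fun n => r (e n)) n) := by
      intro n
      rw [histmap n]
      exact (key _ (he n)).1
    obtain ⟨a, ha⟩ := hτ2 _ hpos
    simp only [mem_iInter] at ha
    exact ⟨a, a.2, mem_iInter.mpr fun n => ha n⟩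
end

section
/- Every metrizable topological group X that is a Choquet space is completely metrizable (i.e., its topology is induced by a complete metric). -/
open Set

variable {X : Type*}

/-- A topological space is completely metrizable if its topology is induced by a complete
metric. -/
def IsCompletelyMetrizable (X : Type*) [t : TopologicalSpace X] : Prop :=
  ∃ m : MetricSpace X, m.toUniformSpace.toTopologicalSpace = t ∧
    @CompleteSpace X m.toUniformSpace

section Statement11Aux

open Filter Topology Function Uniformity

variable {G : Type*} [Group G] [TopologicalSpace G] [IsTopologicalGroup G]

/-- The two-sided uniformity filter of a topological group. -/
def twoSidedU (G : Type*) [Group G] [TopologicalSpace G] : Filter (G × G) :=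
  Filter.comap (fun p : G × G => (p.1⁻¹ * p.2, p.2 * p.1⁻¹)) ((𝓝 1) ×ˢ (𝓝 1))

theorem mem_twoSidedU {s : Set (G × G)} :
    s ∈ twoSidedU G ↔ ∃ V ∈ 𝓝 (1 : G), ∃ W ∈ 𝓝 (1 : G),
      {p : G × G | p.1⁻¹ * p.2 ∈ V ∧ p.2 * p.1⁻¹ ∈ W} ⊆ s := by
  constructor
  · rintro ⟨t, ht, hts⟩
    rcases Filter.mem_prod_iff.mp ht with ⟨V, hV, W, hW, hVW⟩
    exact ⟨V, hV, W, hW, fun p hp => hts (hVW (Set.mk_mem_prod hp.1 hp.2))⟩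
  · rintro ⟨V, hV, W, hW, h⟩
    exact ⟨V ×ˢ W, Filter.prod_mem_prod hV hW, fun p hp => h ⟨hp.1, hp.2⟩⟩

theorem split3 {V : Set G} (hV : V ∈ 𝓝 (1 : G)) :
    ∃ V₁ ∈ 𝓝 (1 : G), (∀ a ∈ V₁, a⁻¹ ∈ V₁) ∧
      ∀ a ∈ V₁, ∀ b ∈ V₁, ∀ c ∈ V₁, a * b * c ∈ V := by
  have hcont : Continuous fun q : G × G × G => q.1 * q.2.1 * q.2.2 := by fun_prop
  have h1 : (fun q : G × G × G => q.1 * q.2.1 * q.2.2) ⁻¹' V ∈ 𝓝 ((1 : G), (1 : G), (1 : G)) := by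
    apply hcont.continuousAt.preimage_mem_nhds
    simpa using hV
  rw [nhds_prod_eq, nhds_prod_eq] at h1
  rcases Filter.mem_prod_iff.mp h1 with ⟨A, hA, BC, hBC, hsub⟩
  rcases Filter.mem_prod_iff.mp hBC with ⟨B, hB, C, hC, hsub2⟩
  have hABC : A ∩ B ∩ C ∈ 𝓝 (1 : G) := inter_mem (inter_mem hA hB) hC
  have hinv : (fun a : G => a⁻¹) ⁻¹' (A ∩ B ∩ C) ∈ 𝓝 (1 : G) := by
    apply continuous_inv.continuousAt.preimage_mem_nhds
    simpa using hABC
  refine ⟨(A ∩ B ∩ C) ∩ (fun a : G => a⁻¹) ⁻¹' (A ∩ B ∩ C), inter_mem hABC hinv, ?_, ?_⟩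
  · rintro a ⟨ha, hainv⟩
    refine ⟨hainv, ?_⟩
    simpa using ha
  · rintro a ⟨⟨⟨haA, -⟩, -⟩, -⟩ b ⟨⟨⟨-, hbB⟩, -⟩, -⟩ c ⟨⟨⟨-, -⟩, hcC⟩, -⟩
    exact hsub (Set.mk_mem_prod haA (hsub2 (Set.mk_mem_prod hbB hcC)))

/-- The two-sided uniform structure of a topological group, inducing the original topology. -/
@[reducible] def twoSidedUS (G : Type*) [Group G] [TopologicalSpace G] [IsTopologicalGroup G] :
    UniformSpace G where
  toTopologicalSpace := ‹_›
  uniformity := twoSidedU G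
  symm := by
    rw [Filter.tendsto_def]
    intro s hs
    rcases mem_twoSidedU.mp hs with ⟨V, hV, W, hW, h⟩
    have hV' : (fun a : G => a⁻¹) ⁻¹' V ∈ 𝓝 (1 : G) := by
      apply continuous_inv.continuousAt.preimage_mem_nhds; simpa using hV
    have hW' : (fun a : G => a⁻¹) ⁻¹' W ∈ 𝓝 (1 : G) := by
      apply continuous_inv.continuousAt.preimage_mem_nhds; simpa using hW
    refine mem_twoSidedU.mpr ⟨_, hV', _, hW', ?_⟩
    rintro ⟨a, b⟩ ⟨h1, h2⟩
    apply h
    constructor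
    · show b⁻¹ * a ∈ V
      have hz : (a⁻¹ * b)⁻¹ ∈ V := h1
      simpa [mul_inv_rev] using hz
    · show a * b⁻¹ ∈ W
      have hz : (b * a⁻¹)⁻¹ ∈ W := h2
      simpa [mul_inv_rev] using hz
  comp := by
    intro s hs
    rcases mem_twoSidedU.mp hs with ⟨V, hV, W, hW, h⟩
    rcases split3 hV with ⟨V₁, hV₁, -, hV₁m⟩
    rcases split3 hW with ⟨W₁, hW₁, -, hW₁m⟩
    have h1V : (1 : G) ∈ V₁ := mem_of_mem_nhds hV₁
    have h1W : (1 : G) ∈ W₁ := mem_of_mem_nhds hW₁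
    refine (Filter.mem_lift'_sets (monotone_id.relComp monotone_id)).mpr
      ⟨{p : G × G | p.1⁻¹ * p.2 ∈ V₁ ∧ p.2 * p.1⁻¹ ∈ W₁},
        mem_twoSidedU.mpr ⟨V₁, hV₁, W₁, hW₁, subset_rfl⟩, ?_⟩
    rintro ⟨a, c⟩ ⟨b, hab, hbc⟩
    apply h
    constructor
    · show a⁻¹ * c ∈ V
      have heq : (a⁻¹ * b) * (b⁻¹ * c) * 1 = a⁻¹ * c := by group
      rw [← heq]
      exact hV₁m _ hab.1 _ hbc.1 _ h1V
    · show c * a⁻¹ ∈ W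
      have heq : (c * b⁻¹) * (b * a⁻¹) * 1 = c * a⁻¹ := by group
      rw [← heq]
      exact hW₁m _ hbc.2 _ hab.2 _ h1W
  nhds_eq_comap_uniformity := by
    intro x
    show 𝓝 x = Filter.comap (Prod.mk x) (twoSidedU G)
    rw [twoSidedU, Filter.comap_comap]
    have heq : ((fun p : G × G => (p.1⁻¹ * p.2, p.2 * p.1⁻¹)) ∘ Prod.mk x) =
        fun y : G => (x⁻¹ * y, y * x⁻¹) := rfl
    rw [heq, Filter.comap_prod]
    have h1 : Filter.comap (Prod.fst ∘ fun y : G => (x⁻¹ * y, y * x⁻¹)) (𝓝 (1 : G)) = 𝓝 x := by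
      have := (Homeomorph.mulLeft x⁻¹).comap_nhds_eq (1 : G)
      simpa [Homeomorph.mulLeft_symm, Function.comp_def] using this
    have h2 : Filter.comap (Prod.snd ∘ fun y : G => (x⁻¹ * y, y * x⁻¹)) (𝓝 (1 : G)) = 𝓝 x := by
      have := (Homeomorph.mulRight x⁻¹).comap_nhds_eq (1 : G)
      simpa [Homeomorph.mulRight_symm, Function.comp_def] using this
    rw [h1, h2, inf_idem]

theorem uniformity_twoSidedUS : 𝓤[twoSidedUS G] = twoSidedU G := rfl

theorem twoSided_uc_inv :
    @UniformContinuous G G (twoSidedUS G) (twoSidedUS G) (fun a => a⁻¹) := by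
  show Filter.Tendsto (fun x : G × G => ((x.1⁻¹ : G), (x.2⁻¹ : G))) (twoSidedU G) (twoSidedU G)
  rw [Filter.tendsto_def]
  intro s hs
  rcases mem_twoSidedU.mp hs with ⟨V, hV, W, hW, h⟩
  have hV' : (fun a : G => a⁻¹) ⁻¹' V ∈ 𝓝 (1 : G) := by
    apply continuous_inv.continuousAt.preimage_mem_nhds; simpa using hV
  have hW' : (fun a : G => a⁻¹) ⁻¹' W ∈ 𝓝 (1 : G) := by
    apply continuous_inv.continuousAt.preimage_mem_nhds; simpa using hW
  refine mem_twoSidedU.mpr ⟨_, hW', _, hV', ?_⟩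
  rintro ⟨a, b⟩ ⟨h1, h2⟩
  apply h
  constructor
  · show (a⁻¹)⁻¹ * b⁻¹ ∈ V
    have : (b * a⁻¹)⁻¹ ∈ V := h2
    simpa [mul_inv_rev] using this
  · show b⁻¹ * (a⁻¹)⁻¹ ∈ W
    have : (a⁻¹ * b)⁻¹ ∈ W := h1
    simpa [mul_inv_rev] using this

theorem twoSided_cauchy_mul {F₁ F₂ : Filter G}
    (h₁ : @Cauchy G (twoSidedUS G) F₁) (h₂ : @Cauchy G (twoSidedUS G) F₂) :
    @Cauchy G (twoSidedUS G) (Filter.map (fun p : G × G => p.1 * p.2) (F₁ ×ˢ F₂)) := by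
  letI := twoSidedUS G
  rw [cauchy_iff] at h₁ h₂ ⊢
  obtain ⟨hne₁, hsm₁⟩ := h₁
  obtain ⟨hne₂, hsm₂⟩ := h₂
  refine ⟨(hne₁.prod hne₂).map _, ?_⟩
  intro s hs
  rw [show s ∈ 𝓤 G ↔ s ∈ twoSidedU G from Iff.rfl, mem_twoSidedU] at hs
  obtain ⟨V, hV, W, hW, hVW⟩ := hs
  obtain ⟨V₁, hV₁, hV₁inv, hV₁m⟩ := split3 hV
  obtain ⟨W₁, hW₁, hW₁inv, hW₁m⟩ := split3 hW
  have hEmem : ∀ V' ∈ 𝓝 (1 : G), ∀ W' ∈ 𝓝 (1 : G),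
      {q : G × G | q.1⁻¹ * q.2 ∈ V' ∧ q.2 * q.1⁻¹ ∈ W'} ∈ 𝓤 G := fun V' hV' W' hW' =>
    mem_twoSidedU.mpr ⟨V', hV', W', hW', subset_rfl⟩
  obtain ⟨t₂, ht₂, ht₂sub⟩ := hsm₂ _ (hEmem V₁ hV₁ W₁ hW₁)
  obtain ⟨y₀, hy₀⟩ := hne₂.nonempty_of_mem ht₂
  have hconjVmem : {v : G | v ∈ V₁ ∧ y₀⁻¹ * v * y₀ ∈ V₁} ∈ 𝓝 (1 : G) := by
    have hcont : Continuous fun v : G => y₀⁻¹ * v * y₀ := by fun_prop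
    have hpre : (fun v : G => y₀⁻¹ * v * y₀) ⁻¹' V₁ ∈ 𝓝 (1 : G) := by
      apply hcont.continuousAt.preimage_mem_nhds
      simpa using hV₁
    exact inter_mem hV₁ hpre
  obtain ⟨t₁, ht₁, ht₁sub⟩ := hsm₁ _ (hEmem _ hconjVmem W₁ hW₁)
  obtain ⟨x₀, hx₀⟩ := hne₁.nonempty_of_mem ht₁
  have hconjWmem : {w : G | w ∈ W₁ ∧ x₀ * w * x₀⁻¹ ∈ W₁} ∈ 𝓝 (1 : G) := by
    have hcont : Continuous fun w : G => x₀ * w * x₀⁻¹ := by fun_prop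
    have hpre : (fun w : G => x₀ * w * x₀⁻¹) ⁻¹' W₁ ∈ 𝓝 (1 : G) := by
      apply hcont.continuousAt.preimage_mem_nhds
      simpa using hW₁
    exact inter_mem hW₁ hpre
  obtain ⟨t₂', ht₂', ht₂'sub⟩ := hsm₂ _ (hEmem V₁ hV₁ _ hconjWmem)
  refine ⟨(fun p : G × G => p.1 * p.2) '' (t₁ ×ˢ (t₂ ∩ t₂')),
    Filter.image_mem_map (Filter.prod_mem_prod ht₁ (inter_mem ht₂ ht₂')), ?_⟩
  rintro ⟨s1, s2⟩ ⟨⟨⟨a1, b1⟩, ⟨ha1, hb1⟩, rfl⟩, ⟨⟨a2, b2⟩, ⟨ha2, hb2⟩, rfl⟩⟩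
  apply hVW
  constructor
  · show (a1 * b1)⁻¹ * (a2 * b2) ∈ V
    have hv : a1⁻¹ * a2 ∈ {v : G | v ∈ V₁ ∧ y₀⁻¹ * v * y₀ ∈ V₁} :=
      (ht₁sub (Set.mk_mem_prod ha1 ha2)).1
    have hu1 : y₀⁻¹ * b1 ∈ V₁ := (ht₂sub (Set.mk_mem_prod hy₀ hb1.1)).1
    have hu2 : y₀⁻¹ * b2 ∈ V₁ := (ht₂sub (Set.mk_mem_prod hy₀ hb2.1)).1
    have heq : (y₀⁻¹ * b1)⁻¹ * (y₀⁻¹ * (a1⁻¹ * a2) * y₀) * (y₀⁻¹ * b2)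
        = (a1 * b1)⁻¹ * (a2 * b2) := by group
    rw [← heq]
    exact hV₁m _ (hV₁inv _ hu1) _ hv.2 _ hu2
  · show (a2 * b2) * (a1 * b1)⁻¹ ∈ W
    have hw : b2 * b1⁻¹ ∈ {w : G | w ∈ W₁ ∧ x₀ * w * x₀⁻¹ ∈ W₁} :=
      (ht₂'sub (Set.mk_mem_prod hb1.2 hb2.2)).2
    have hr2 : a2 * x₀⁻¹ ∈ W₁ := (ht₁sub (Set.mk_mem_prod hx₀ ha2)).2
    have hr1 : a1 * x₀⁻¹ ∈ W₁ := (ht₁sub (Set.mk_mem_prod hx₀ ha1)).2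
    have heq : (a2 * x₀⁻¹) * (x₀ * (b2 * b1⁻¹) * x₀⁻¹) * (a1 * x₀⁻¹)⁻¹
        = (a2 * b2) * (a1 * b1)⁻¹ := by group
    rw [← heq]
    exact hW₁m _ hr2 _ hw.2 _ (hW₁inv _ hr1)

/-- The key Banach–Mazur/Choquet construction: if `G` has a winning Choquet strategy and embeds
densely into a metric space `Y`, then the image of `G` contains a countable intersection of
dense open subsets of `Y`. -/
theorem choquet_residual {G Y : Type*} [TopologicalSpace G] [MetricSpace Y]
    {σ : List (Set G) → Set G} (hσ : IsWinningChoquetStrategy σ)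
    {c : G → Y} (hc : IsInducing c) (hd : DenseRange c) :
    ∃ D : ℕ → Set Y, (∀ n, IsOpen (D n)) ∧ (∀ n, Dense (D n)) ∧ (⋂ n, D n) ⊆ Set.range c := by
  classical
  obtain ⟨hσ1, hσ2⟩ := hσ
  let Child : ℕ → (List (Set G) × Set Y) → (List (Set G) × Set Y) → Prop := fun n par p =>
    ChoquetPos σ p.1 ∧ IsOpen p.2 ∧ p.2.Nonempty ∧ c ⁻¹' p.2 = σ p.1 ∧ p.2 ⊆ par.2 ∧
      (∃ U, p.1 = U :: (if n = 0 then [] else par.1) ∧ U ⊆ c ⁻¹' par.2) ∧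
      ∃ z : Y, p.2 ⊆ Metric.ball z ((2⁻¹ : ℝ) ^ n)
  -- maximal pairwise-disjoint subfamilies
  have maxd : ∀ C : Set (List (Set G) × Set Y), ∃ A : Set (List (Set G) × Set Y), A ⊆ C ∧
      (∀ p ∈ A, ∀ q ∈ A, p ≠ q → Disjoint p.2 q.2) ∧
      ∀ p ∈ C, (∀ q ∈ A, Disjoint p.2 q.2) → p ∈ A := by
    intro C
    have hub : ∀ ch ⊆ {B : Set (List (Set G) × Set Y) |
        B ⊆ C ∧ ∀ p ∈ B, ∀ q ∈ B, p ≠ q → Disjoint p.2 q.2},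
        IsChain (· ⊆ ·) ch → ∃ ub ∈ {B : Set (List (Set G) × Set Y) |
          B ⊆ C ∧ ∀ p ∈ B, ∀ q ∈ B, p ≠ q → Disjoint p.2 q.2}, ∀ s ∈ ch, s ⊆ ub := by
      intro ch hchS hchain
      refine ⟨⋃₀ ch, ⟨sUnion_subset fun B hB => (hchS hB).1, ?_⟩,
        fun s hs => subset_sUnion_of_mem hs⟩
      rintro x ⟨B1, hB1, hx1⟩ y ⟨B2, hB2, hy2⟩ hxy
      rcases hchain.total hB1 hB2 with h | h
      · exact (hchS hB2).2 x (h hx1) y hy2 hxy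
      · exact (hchS hB1).2 x hx1 y (h hy2) hxy
    obtain ⟨A, hA⟩ := zorn_subset _ hub
    refine ⟨A, hA.prop.1, hA.prop.2, ?_⟩
    intro p hpC hdisj
    have hins : insert p A ∈
        {B : Set (List (Set G) × Set Y) | B ⊆ C ∧ ∀ p ∈ B, ∀ q ∈ B, p ≠ q → Disjoint p.2 q.2} := by
      refine ⟨insert_subset hpC hA.prop.1, ?_⟩
      rintro x (rfl | hx) y (rfl | hy) hxy
      · exact absurd rfl hxy
      · exact hdisj y hy
      · exact (hdisj x hx).symm
      · exact hA.prop.2 x hx y hy hxy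
    exact hA.2 hins (subset_insert p A) (mem_insert p A)
  choose M hMsub hMdisj hMmax using maxd
  let A : ℕ → Set (List (Set G) × Set Y) := fun n =>
    Nat.rec (M {p | Child 0 ([], univ) p})
      (fun k Ak => M {p | ∃ par ∈ Ak, Child (k + 1) par p}) n
  have hA0 : A 0 = M {p | Child 0 ([], univ) p} := rfl
  have hAsucc : ∀ k, A (k + 1) = M {p | ∃ par ∈ A k, Child (k + 1) par p} := fun k => rfl
  -- existence of children inside any given nonempty open subset of the parent's set
  have child_exists : ∀ (n : ℕ) (par : List (Set G) × Set Y),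
      (n ≠ 0 → ChoquetPos σ par.1 ∧ c ⁻¹' par.2 = σ par.1) →
      ∀ O : Set Y, IsOpen O → O.Nonempty → O ⊆ par.2 →
      ∃ p, Child n par p ∧ p.2 ⊆ O := by
    intro n par hpar O hOo hOne hOsub
    obtain ⟨a, ha⟩ := hd.exists_mem_open hOo hOne
    set O₂ := O ∩ Metric.ball (c a) ((2⁻¹ : ℝ) ^ n) with hO₂
    have hO₂o : IsOpen O₂ := hOo.inter Metric.isOpen_ball
    have haO₂ : c a ∈ O₂ := ⟨ha, Metric.mem_ball_self (by positivity)⟩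
    have hUo : IsOpen (c ⁻¹' O₂) := hO₂o.preimage hc.continuous
    have haU : a ∈ c ⁻¹' O₂ := haO₂
    have hUsub : c ⁻¹' O₂ ⊆ c ⁻¹' par.2 := fun x hx => hOsub hx.1
    set l : List (Set G) := (c ⁻¹' O₂) :: (if n = 0 then [] else par.1) with hl
    have hpos : ChoquetPos σ l := by
      rcases n with _ | k
      · rw [hl, if_pos rfl]
        exact ChoquetPos.single _ hUo ⟨a, haU⟩
      · rw [hl, if_neg (Nat.succ_ne_zero k)]
        refine ChoquetPos.cons _ _ (hpar (Nat.succ_ne_zero k)).1 hUo ⟨a, haU⟩ ?_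
        rw [← (hpar (Nat.succ_ne_zero k)).2]
        exact hUsub
    obtain ⟨hSo, hSne, hShead⟩ := hσ1 l hpos
    have hheadsub : σ l ⊆ c ⁻¹' O₂ := by
      apply hShead
      rw [hl]
      rfl
    obtain ⟨O', hO'o, hO'pre⟩ := hc.isOpen_iff.mp hSo
    refine ⟨(l, O' ∩ O₂), ⟨hpos, hO'o.inter hO₂o, ?_, ?_, ?_, ⟨c ⁻¹' O₂, rfl, hUsub⟩,
      ⟨c a, inter_subset_right.trans inter_subset_right⟩⟩, inter_subset_right.trans inter_subset_left⟩
    · obtain ⟨b, hb⟩ := hSne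
      exact ⟨c b, by rw [← hO'pre] at hb; exact hb, hheadsub hb⟩
    · rw [preimage_inter, hO'pre]
      exact inter_eq_left.mpr hheadsub
    · exact inter_subset_right.trans (inter_subset_left.trans hOsub)
  -- basic facts about members of the families
  have hmem : ∀ n, ∀ p ∈ A n, ChoquetPos σ p.1 ∧ IsOpen p.2 ∧ p.2.Nonempty ∧
      c ⁻¹' p.2 = σ p.1 ∧ ∃ z : Y, p.2 ⊆ Metric.ball z ((2⁻¹ : ℝ) ^ n) := by
    intro n p hp
    rcases n with _ | k
    · have h : Child 0 ([], univ) p := hMsub _ hp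
      exact ⟨h.1, h.2.1, h.2.2.1, h.2.2.2.1, h.2.2.2.2.2.2⟩
    · obtain ⟨par, -, h⟩ : ∃ par ∈ A k, Child (k + 1) par p := hMsub _ hp
      exact ⟨h.1, h.2.1, h.2.2.1, h.2.2.2.1, h.2.2.2.2.2.2⟩
  set D : ℕ → Set Y := fun n => ⋃ p ∈ A n, p.2 with hD
  have hDopen : ∀ n, IsOpen (D n) := fun n =>
    isOpen_biUnion fun p hp => (hmem n p hp).2.1
  -- density steps
  have step0 : ∀ O : Set Y, IsOpen O → O.Nonempty → (O ∩ D 0).Nonempty := by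
    intro O hOo hOne
    obtain ⟨p, hch, hsub⟩ := child_exists 0 ([], univ) (fun h => absurd rfl h) O hOo hOne
      (subset_univ O)
    rcases Classical.em (∀ q ∈ A 0, Disjoint p.2 q.2) with hdis | hdis
    · have hpA : p ∈ A 0 := hMmax _ _ hch hdis
      obtain ⟨x, hx⟩ := hch.2.2.1
      exact ⟨x, hsub hx, mem_biUnion hpA hx⟩
    · obtain ⟨q, hq⟩ := not_forall.mp hdis
      obtain ⟨hqA, hndis⟩ := Classical.not_imp.mp hq
      obtain ⟨x, hx1, hx2⟩ := Set.not_disjoint_iff.mp hndis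
      exact ⟨x, hsub hx1, mem_biUnion hqA hx2⟩
  have stepS : ∀ n, ∀ q ∈ A n, ∀ O : Set Y, IsOpen O → O.Nonempty → O ⊆ q.2 →
      (O ∩ D (n + 1)).Nonempty := by
    intro n q hq O hOo hOne hOsub
    obtain ⟨p, hch, hsub⟩ := child_exists (n + 1) q
      (fun _ => ⟨(hmem n q hq).1, (hmem n q hq).2.2.2.1⟩) O hOo hOne hOsub
    have hpC : p ∈ {p | ∃ par ∈ A n, Child (n + 1) par p} := ⟨q, hq, hch⟩
    rcases Classical.em (∀ r ∈ A (n + 1), Disjoint p.2 r.2) with hdis | hdis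
    · have hpA : p ∈ A (n + 1) := hMmax _ _ hpC hdis
      obtain ⟨x, hx⟩ := hch.2.2.1
      exact ⟨x, hsub hx, mem_biUnion hpA hx⟩
    · obtain ⟨r, hr⟩ := not_forall.mp hdis
      obtain ⟨hrA, hndis⟩ := Classical.not_imp.mp hr
      obtain ⟨x, hx1, hx2⟩ := Set.not_disjoint_iff.mp hndis
      exact ⟨x, hsub hx1, mem_biUnion hrA hx2⟩
  have hDense : ∀ n, Dense (D n) := by
    intro n
    induction n with
    | zero => exact dense_iff_inter_open.mpr fun O hOo hOne => step0 O hOo hOne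
    | succ k ih =>
      rw [dense_iff_inter_open]
      intro O hOo hOne
      obtain ⟨x, hxO, hxD⟩ := dense_iff_inter_open.mp ih O hOo hOne
      obtain ⟨q, hq, hxq⟩ := mem_iUnion₂.mp hxD
      have h := stepS k q hq (O ∩ q.2) (hOo.inter (hmem k q hq).2.1) ⟨x, hxO, hxq⟩
        inter_subset_right
      obtain ⟨y, ⟨hy1, -⟩, hy2⟩ := h
      exact ⟨y, hy1, hy2⟩
  refine ⟨D, hDopen, hDense, ?_⟩
  intro x hx
  have hxn : ∀ n, ∃ p ∈ A n, x ∈ p.2 := by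
    intro n
    obtain ⟨q, hq, hxq⟩ := mem_iUnion₂.mp (mem_iInter.mp hx n)
    exact ⟨q, hq, hxq⟩
  choose p hpA hxp using hxn
  have hAdisj : ∀ n, ∀ p ∈ A n, ∀ q ∈ A n, p ≠ q → Disjoint p.2 q.2 := by
    intro n
    rcases n with _ | k
    · exact hMdisj _
    · exact hMdisj _
  have hsucc : ∀ n, (p (n + 1)).1 = ((p (n + 1)).1.headI) :: (p n).1 ∧
      (p (n + 1)).1.headI ⊆ c ⁻¹' (p n).2 := by
    intro n
    obtain ⟨par, hpar, hch⟩ : ∃ par ∈ A n, Child (n + 1) par (p (n + 1)) :=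
      hMsub _ (hpA (n + 1))
    have hpareq : par = p n := by
      by_contra hne
      have hdis := hAdisj n par hpar (p n) (hpA n) hne
      have hx1 : x ∈ par.2 := hch.2.2.2.2.1 (hxp (n + 1))
      exact Set.disjoint_left.mp hdis hx1 (hxp n)
    obtain ⟨U, hU1, hU2⟩ := hch.2.2.2.2.2.1
    rw [if_neg (Nat.succ_ne_zero n)] at hU1
    subst hpareq
    constructor
    · rw [hU1]; rfl
    · rw [hU1]
      exact hU2
  have h0 : (p 0).1 = [(p 0).1.headI] := by
    have hch : Child 0 ([], univ) (p 0) := hMsub _ (hpA 0)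
    obtain ⟨U, hU1, -⟩ := hch.2.2.2.2.2.1
    rw [if_pos rfl] at hU1
    rw [hU1]
    rfl
  have hhist : ∀ n, choquetHist (fun k => (p k).1.headI) n = (p n).1 := by
    intro n
    induction n with
    | zero =>
      show [(p 0).1.headI] = (p 0).1
      exact h0.symm
    | succ k ih =>
      show (p (k + 1)).1.headI :: choquetHist (fun k => (p k).1.headI) k = _
      rw [ih, ← (hsucc k).1]
  have hruns : ∀ n, ChoquetPos σ (choquetHist (fun k => (p k).1.headI) n) := fun n =>
    (hhist n) ▸ (hmem n _ (hpA n)).1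
  obtain ⟨y, hy⟩ := hσ2 _ hruns
  have hcy : ∀ n, c y ∈ (p n).2 := by
    intro n
    have h1 : y ∈ (p (n + 1)).1.headI := mem_iInter.mp hy (n + 1)
    exact (hsucc n).2 h1
  have hdist : ∀ n : ℕ, dist x (c y) ≤ 2 * (2⁻¹ : ℝ) ^ n := by
    intro n
    obtain ⟨z, hz⟩ := (hmem n _ (hpA n)).2.2.2.2
    calc dist x (c y) ≤ dist x z + dist z (c y) := dist_triangle _ _ _
      _ ≤ (2⁻¹ : ℝ) ^ n + (2⁻¹ : ℝ) ^ n :=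
          add_le_add (le_of_lt (Metric.mem_ball.mp (hz (hxp n))))
            (le_of_lt (Metric.mem_ball'.mp (hz (hcy n))))
      _ = 2 * (2⁻¹ : ℝ) ^ n := by ring
  have hle : dist x (c y) ≤ 0 := by
    have htend : Filter.Tendsto (fun n : ℕ => 2 * (2⁻¹ : ℝ) ^ n) Filter.atTop (𝓝 0) := by
      have := tendsto_pow_atTop_nhds_zero_of_lt_one (by norm_num : (0 : ℝ) ≤ 2⁻¹)
        (by norm_num : (2⁻¹ : ℝ) < 1)
      simpa using this.const_mul (2 : ℝ)
    exact ge_of_tendsto' htend hdist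
  exact ⟨y, (dist_le_zero.mp hle).symm⟩

end Statement11Aux

section Statement11Main

open Filter Topology Function Uniformity

/-- Every metrizable topological group `X` that is a Choquet space is
completely metrizable. -/
theorem statement_11 {X : Type*} [TopologicalSpace X] [Group X] [IsTopologicalGroup X]
    [TopologicalSpace.MetrizableSpace X] (hChoquet : IsChoquet X) :
    IsCompletelyMetrizable X := by
  classical
  obtain ⟨σ, hσ⟩ := hChoquet
  haveI : Nonempty X := ⟨1⟩
  let u2 : UniformSpace X := twoSidedUS X
  haveI hcg : Filter.IsCountablyGenerated (𝓤[u2]) := by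
    show Filter.IsCountablyGenerated (twoSidedU X)
    rw [twoSidedU]
    infer_instance
  haveI hT0 : @T0Space X u2.toTopologicalSpace := (inferInstance : T0Space X)
  letI m : MetricSpace X := @UniformSpace.metricSpace X u2 hcg hT0
  refine ⟨m, rfl, ?_⟩
  -- From now on we work with the completion of `X` with respect to the two-sided uniformity.
  have hue : IsUniformEmbedding ((↑) : X → UniformSpace.Completion X) :=
    UniformSpace.Completion.isUniformEmbedding_coe X
  have di : IsDenseInducing ((↑) : X → UniformSpace.Completion X) :=
    UniformSpace.Completion.isDenseInducing_coe
  have di2 : IsDenseInducing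
      (Prod.map ((↑) : X → UniformSpace.Completion X) ((↑) : X → UniformSpace.Completion X)) :=
    di.prodMap di
  -- multiplication is Cauchy-continuous, hence extends to the completion
  have hext : ∀ b : (UniformSpace.Completion X) × (UniformSpace.Completion X),
      ∃ z : UniformSpace.Completion X,
        Filter.Tendsto (fun p : X × X => ((p.1 * p.2 : X) : UniformSpace.Completion X))
          (Filter.comap (Prod.map (↑) (↑)) (𝓝 b)) (𝓝 z) := by
    intro b
    set F := Filter.comap
      (Prod.map ((↑) : X → UniformSpace.Completion X) ((↑) : X → UniformSpace.Completion X))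
      (𝓝 b) with hFdef
    haveI hFne : F.NeBot := di2.comap_nhds_neBot b
    have hFc : Cauchy F := by
      refine Cauchy.comap cauchy_nhds ?_
      exact (hue.isUniformInducing.prod hue.isUniformInducing).comap_uniformity.le
    have c1 : Cauchy (Filter.map Prod.fst F) := hFc.map uniformContinuous_fst
    have c2 : Cauchy (Filter.map Prod.snd F) := hFc.map uniformContinuous_snd
    have cm : Cauchy (Filter.map (fun p : X × X => p.1 * p.2)
        (Filter.map Prod.fst F ×ˢ Filter.map Prod.snd F)) :=
      twoSided_cauchy_mul c1 c2
    haveI : (Filter.map (fun p : X × X => p.1 * p.2) F).NeBot := hFne.map _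
    have cmF : Cauchy (Filter.map (fun p : X × X => p.1 * p.2) F) :=
      cm.mono (Filter.map_mono Filter.le_prod_map_fst_snd)
    have cY : Cauchy (Filter.map (fun p : X × X => ((p.1 * p.2 : X) : UniformSpace.Completion X))
        F) := by
      have h := cmF.map (UniformSpace.Completion.uniformContinuous_coe X)
      rwa [Filter.map_map] at h
    obtain ⟨z, hz⟩ := CompleteSpace.complete cY
    exact ⟨z, hz⟩
  set mA : (UniformSpace.Completion X) × (UniformSpace.Completion X) → UniformSpace.Completion X :=
    di2.extend (fun p : X × X => ((p.1 * p.2 : X) : UniformSpace.Completion X)) with hmA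
  have hmAcont : Continuous mA := di2.continuous_extend hext
  have hmAcoe : ∀ a b : X, mA (↑a, ↑b) = ((a * b : X) : UniformSpace.Completion X) := by
    intro a b
    exact di2.extend_eq ((UniformSpace.Completion.continuous_coe X).comp continuous_mul) (a, b)
  set iA : UniformSpace.Completion X → UniformSpace.Completion X :=
    UniformSpace.Completion.map (fun a : X => a⁻¹) with hiA
  have hicont : Continuous iA := UniformSpace.Completion.continuous_map
  have hicoe : ∀ a : X, iA ↑a = ((a⁻¹ : X) : UniformSpace.Completion X) := fun a =>
    UniformSpace.Completion.map_coe twoSided_uc_inv a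
  have hii : ∀ y : UniformSpace.Completion X, iA (iA y) = y := by
    have h := UniformSpace.Completion.denseRange_coe (α := X)
    have heq : (iA ∘ iA) = id := by
      refine h.equalizer (hicont.comp hicont) continuous_id ?_
      funext a
      show iA (iA ↑a) = ↑a
      rw [hicoe, hicoe, inv_inv]
    intro y
    exact congrFun heq y
  have hid1 : ∀ x' y : UniformSpace.Completion X, mA (iA x', mA (x', y)) = y := by
    have heq : (fun q : (UniformSpace.Completion X) × (UniformSpace.Completion X) =>
        mA (iA q.1, mA q)) = Prod.snd := by
      refine di2.dense.equalizer
        (hmAcont.comp ((hicont.comp continuous_fst).prodMk hmAcont)) continuous_snd ?_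
      funext q
      show mA (iA ↑q.1, mA (↑q.1, ↑q.2)) = ↑q.2
      rw [hmAcoe, hicoe, hmAcoe, inv_mul_cancel_left]
    intro x' y
    exact congrFun heq (x', y)
  have hid2 : ∀ x' y : UniformSpace.Completion X, mA (mA (x', y), iA y) = x' := by
    have heq : (fun q : (UniformSpace.Completion X) × (UniformSpace.Completion X) =>
        mA (mA q, iA q.2)) = Prod.fst := by
      refine di2.dense.equalizer
        (hmAcont.comp (hmAcont.prodMk (hicont.comp continuous_snd))) continuous_fst ?_
      funext q
      show mA (mA (↑q.1, ↑q.2), iA ↑q.2) = ↑q.1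
      rw [hmAcoe, hicoe, hmAcoe, mul_inv_cancel_right]
    intro x' y
    exact congrFun heq (x', y)
  -- the image of `X` is residual in the completion
  obtain ⟨D, hDo, hDd, hDsub⟩ := choquet_residual hσ di.toIsInducing
    UniformSpace.Completion.denseRange_coe
  -- surjectivity of the embedding, via the Baire category theorem
  have hsurj : Function.Surjective ((↑) : X → UniformSpace.Completion X) := by
    intro x'
    set f : UniformSpace.Completion X → UniformSpace.Completion X := fun y => mA (x', y) with hf
    set g : UniformSpace.Completion X → UniformSpace.Completion X := fun y => mA (iA x', y)
      with hg
    have hfc : Continuous f := hmAcont.comp (continuous_const.prodMk continuous_id)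
    have hgc : Continuous g := hmAcont.comp (continuous_const.prodMk continuous_id)
    have hgf : ∀ y, g (f y) = y := fun y => hid1 x' y
    have hfg : ∀ y, f (g y) = y := by
      intro y
      have h := hid1 (iA x') y
      rwa [hii x'] at h
    have hfo : IsOpenMap f := (Homeomorph.mk ⟨f, g, hgf, hfg⟩ hfc hgc).isOpenMap
    haveI : Nonempty (UniformSpace.Completion X) := ⟨((1 : X) : UniformSpace.Completion X)⟩
    have hT : Dense (⋂ n, (D n ∩ f ⁻¹' (D n))) := by
      apply dense_iInter_of_isOpen_nat
      · intro n
        exact (hDo n).inter ((hDo n).preimage hfc)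
      · intro n
        exact (hDd n).inter_of_isOpen_left ((hDd n).preimage hfo) (hDo n)
    obtain ⟨w, hw⟩ := hT.nonempty
    have hw1 : w ∈ ⋂ n, D n := mem_iInter.mpr fun n => (mem_iInter.mp hw n).1
    have hw2 : f w ∈ ⋂ n, D n := mem_iInter.mpr fun n => (mem_iInter.mp hw n).2
    obtain ⟨a, ha⟩ := hDsub hw1
    obtain ⟨b, hb⟩ := hDsub hw2
    refine ⟨b * a⁻¹, ?_⟩
    calc ((b * a⁻¹ : X) : UniformSpace.Completion X)
        = mA (↑b, ((a⁻¹ : X) : UniformSpace.Completion X)) := (hmAcoe b a⁻¹).symm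
      _ = mA (f w, iA w) := by rw [hb, ← hicoe a, ha]
      _ = mA (mA (x', w), iA w) := rfl
      _ = x' := hid2 x' w
  -- completeness of `X` follows from surjectivity of the embedding into the completion
  constructor
  intro F hF
  have hFc : Cauchy (Filter.map ((↑) : X → UniformSpace.Completion X) F) :=
    hF.map (UniformSpace.Completion.uniformContinuous_coe X)
  obtain ⟨y', hy'⟩ := CompleteSpace.complete hFc
  obtain ⟨x, rfl⟩ := hsurj y'
  refine ⟨x, ?_⟩
  have hnh : 𝓝 x = Filter.comap ((↑) : X → UniformSpace.Completion X)
      (𝓝 ((x : UniformSpace.Completion X))) := di.toIsInducing.nhds_eq_comap x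
  rw [hnh]
  exact Filter.map_le_iff_le_comap.mp hy'

end Statement11Main
end
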